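/- Let t ≥ 0 and let γ be a complex root of x^5 + t x^3 + 1 with 0 < arg(γ) < 2π/5 (i.e. positive imaginary part and argument less than 2π/5). Then |γ − 1| ≥ 0.2. -/

import Mathlib

theorem stmt_16 (t : ℝ) (ht : 0 ≤ t) (γ : ℂ)
    (hγ : γ ^ 5 + (t : ℂ) * γ ^ 3 + 1 = 0)
    (harg0 : 0 < γ.arg) (harg1 : γ.arg < 2 * Real.pi / 5) :
    0.2 ≤ ‖γ - 1‖ := by
  by_contra h
  push_neg at h
  set a := γ.re with ha
  set b := γ.im with hb
  -- γ ≠ 0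
  have hγ0 : γ ≠ 0 := by
    intro h0
    rw [h0] at hγ
    norm_num at hγ
  -- Im γ > 0
  have hpi : γ.arg < Real.pi := by
    have : 2 * Real.pi / 5 < Real.pi := by
      nlinarith [Real.pi_pos]
    linarith
  have hsin : 0 < Real.sin γ.arg := Real.sin_pos_of_pos_of_lt_pi harg0 hpi
  have habs : 0 < ‖γ‖ := norm_pos_iff.mpr hγ0
  have himpos : 0 < b := by
    have := Complex.norm_mul_sin_arg γ
    rw [← hb] at this
    nlinarith
  -- |γ-1|^2 < 0.04
  have hsq : (a - 1)^2 + b^2 < 0.04 := by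
    have h2 : (‖γ - 1‖)^2 < 0.04 := by
      have h0 : (0:ℝ) ≤ ‖γ - 1‖ := norm_nonneg _
      nlinarith
    rw [Complex.sq_norm, Complex.normSq_apply] at h2
    simp only [Complex.sub_re, Complex.sub_im, Complex.one_re, Complex.one_im] at h2
    rw [← ha, ← hb] at h2
    nlinarith
  -- real part of the equation
  have hre : a^5 - 10*a^3*b^2 + 5*a*b^4 + t*(a^3 - 3*a*b^2) + 1 = 0 := by
    have := congrArg Complex.re hγ
    simp only [Complex.add_re, Complex.one_re, Complex.mul_re, Complex.ofReal_re,
      Complex.ofReal_im, Complex.zero_re, pow_succ, pow_zero, one_mul,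
      Complex.mul_im] at this
    rw [← ha, ← hb] at this
    ring_nf at this ⊢
    linarith [this]
  have ha8 : 0.8 < a := by nlinarith
  have hb2 : b^2 < 0.04 := by nlinarith
  have h1 : 0 ≤ t * (a^3 - 3*a*b^2) := mul_nonneg ht (by nlinarith)
  have h2 : 0 < a^3 * (a^2 - 10*b^2) := by
    apply mul_pos (by positivity)
    nlinarith
  nlinarith [mul_nonneg (by linarith : (0:ℝ) ≤ a) (pow_nonneg himpos.le 4)]
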